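/- In the correctly specified and strongly identified SMDP, a pair (σ,m) is a Berk-Nash equilibrium if and only if σ is an optimal strategy for the MDP with the true transition function Q and m is a stationary distribution for (σ,Q). -/

import Mathlib

open scoped BigOperators Classical
open MeasureTheory

section BerkNash

variable {S X Θ : Type} [Fintype S] [Fintype X] [MeasurableSpace Θ]

/-- `m` is a probability distribution on `Gr(Γ) ⊆ S × X`. -/
def IsDistOn (Γ : S → Finset X) (m : S → X → ℝ) : Prop :=
  (∀ s x, 0 ≤ m s x) ∧ (∀ s x, x ∉ Γ s → m s x = 0) ∧ (∑ s, ∑ x, m s x = 1)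

/-- `σ` is a strategy: a distribution over feasible actions at each state. -/
def IsStrategy (Γ : S → Finset X) (σ : S → X → ℝ) : Prop :=
  (∀ s x, 0 ≤ σ s x) ∧ (∀ s x, x ∉ Γ s → σ s x = 0) ∧ (∀ s, ∑ x, σ s x = 1)

/-- `m` is a stationary distribution given `(σ, Q)`. -/
def IsStationarySMDP (Γ : S → Finset X) (Q : S → X → S → ℝ)
    (σ : S → X → ℝ) (m : S → X → ℝ) : Prop :=
  IsDistOn Γ m ∧ ∀ s' x', m s' x' = ∑ s, ∑ x, σ s' x' * Q s x s' * m s x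

/-- `σ` is an optimal strategy for the MDP with transition probability function `Q`:
there is a (Bellman) value function `V` such that `V s` is the maximal one-step value
and `σ` only puts weight on maximizing actions. (For `0 ≤ δ < 1` such a `V` is the
unique solution of the Bellman equation.) -/
def IsOptimalMDP (Γ : S → Finset X) (Q : S → X → S → ℝ)
    (π : S → X → S → ℝ) (δ : ℝ) (σ : S → X → ℝ) : Prop :=
  ∃ V : S → ℝ,
    (∀ s, ∀ x ∈ Γ s, (∑ s', Q s x s' * (π s x s' + δ * V s')) ≤ V s) ∧
    (∀ s, ∃ x ∈ Γ s, (∑ s', Q s x s' * (π s x s' + δ * V s')) = V s) ∧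
    (∀ s x, 0 < σ s x →
      x ∈ Γ s ∧ (∑ s', Q s x s' * (π s x s' + δ * V s')) = V s)

/-- Weighted Kullback-Leibler divergence (extended-real valued, with the usual
conventions) between the true `Q` and the subjective model `Q_θ`, weighted by `m`. -/
noncomputable def wKLD (Q : S → X → S → ℝ) (Qθ : Θ → S → X → S → ℝ)
    (m : S → X → ℝ) (θ : Θ) : EReal :=
  ∑ s, ∑ x, ∑ s',
    if m s x = 0 ∨ Q s x s' = 0 then (0 : EReal)
    else if Qθ θ s x s' = 0 then (⊤ : EReal)
    else ((m s x * (Q s x s' * Real.log (Q s x s' / Qθ θ s x s'))) : ℝ)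

/-- The set `Θ_Q(m)` of closest parameter values given `m`. -/
def ThetaQ (Q : S → X → S → ℝ) (Qθ : Θ → S → X → S → ℝ)
    (m : S → X → ℝ) : Set Θ :=
  {θ | ∀ θ', wKLD Q Qθ m θ ≤ wKLD Q Qθ m θ'}

/-- `(σ, m)` is a Berk-Nash equilibrium of the SMDP `(Q, {Q_θ})`: there is a belief
`μ ∈ Δ(Θ)` such that (i) `σ` is optimal for the MDP with transition `Q̄_μ = ∫ Q_θ dμ`,
(ii) `μ` puts probability one on `Θ_Q(m)`, and (iii) `m` is stationary given `(σ,Q)`. -/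
def IsBerkNash (Γ : S → Finset X) (Q : S → X → S → ℝ)
    (Qθ : Θ → S → X → S → ℝ) (π : S → X → S → ℝ) (δ : ℝ)
    (σ : S → X → ℝ) (m : S → X → ℝ) : Prop :=
  ∃ μ : Measure Θ, IsProbabilityMeasure μ ∧
    IsOptimalMDP Γ (fun s x s' => ∫ θ, Qθ θ s x s' ∂μ) π δ σ ∧
    μ {θ | θ ∈ ThetaQ Q Qθ m} = 1 ∧
    IsStationarySMDP Γ Q σ m

/-- Auxiliary: a finite `EReal` sum with no `⊥` terms is not `⊥`. -/
lemma ereal_sum_ne_bot {α : Type*} (t : Finset α) (f : α → EReal)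
    (h : ∀ a ∈ t, f a ≠ ⊥) : ∑ a ∈ t, f a ≠ ⊥ := by
  classical
  induction t using Finset.induction_on with
  | empty => simp
  | insert _ _ hnot ih =>
    rename_i a t'
    rw [Finset.sum_insert hnot, Ne, EReal.add_eq_bot_iff, not_or]
    exact ⟨h a (Finset.mem_insert_self a t'),
      ih fun b hb => h b (Finset.mem_insert_of_mem hb)⟩

/-- Auxiliary: real coercion commutes with finite sums into `EReal`. -/
lemma ereal_coe_sum {α : Type*} (t : Finset α) (f : α → ℝ) :
    ((∑ a ∈ t, f a : ℝ) : EReal) = ∑ a ∈ t, (f a : EReal) := by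
  classical
  induction t using Finset.induction_on with
  | empty => simp
  | insert _ _ hnot ih =>
    rename_i a t'
    rw [Finset.sum_insert hnot, Finset.sum_insert hnot, EReal.coe_add, ih]

/-- The weighted KL divergence is nonnegative. -/
lemma wKLD_nonneg (Γ : S → Finset X) (Q : S → X → S → ℝ)
    (hQ0 : ∀ s x s', 0 ≤ Q s x s')
    (hQ1 : ∀ s, ∀ x ∈ Γ s, ∑ s', Q s x s' = 1)
    (Qθ : Θ → S → X → S → ℝ)
    (hQθ0 : ∀ θ s x s', 0 ≤ Qθ θ s x s')
    (hQθ1 : ∀ θ s, ∀ x ∈ Γ s, ∑ s', Qθ θ s x s' = 1)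
    (m : S → X → ℝ) (hm : IsDistOn Γ m) (θ : Θ) :
    0 ≤ wKLD Q Qθ m θ := by
  classical
  unfold wKLD
  refine Finset.sum_nonneg fun s _ => Finset.sum_nonneg fun x _ => ?_
  by_cases hmx : m s x = 0
  · simp [hmx]
  have hxΓ : x ∈ Γ s := by
    by_contra h; exact hmx (hm.2.1 s x h)
  have hm0 : 0 < m s x := lt_of_le_of_ne (hm.1 s x) (Ne.symm hmx)
  set F : S → EReal := fun s' =>
    if m s x = 0 ∨ Q s x s' = 0 then (0 : EReal)
    else if Qθ θ s x s' = 0 then (⊤ : EReal)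
    else ((m s x * (Q s x s' * Real.log (Q s x s' / Qθ θ s x s'))) : ℝ) with hF
  have hFnebot : ∀ s', F s' ≠ ⊥ := by
    intro s'; rw [hF]; dsimp only
    split_ifs with h1 h2
    · simp
    · simp
    · exact EReal.coe_ne_bot _
  by_cases htop : ∃ s0, Q s x s0 ≠ 0 ∧ Qθ θ s x s0 = 0
  · obtain ⟨s0, hq, hqθ⟩ := htop
    have hFs0 : F s0 = ⊤ := by rw [hF]; simp [hmx, hq, hqθ]
    have : ∑ s', F s' = ⊤ := by
      rw [← Finset.add_sum_erase _ _ (Finset.mem_univ s0), hFs0]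
      exact EReal.top_add_of_ne_bot
        (ereal_sum_ne_bot _ _ fun a _ => hFnebot a)
    rw [this]; exact le_top
  · push_neg at htop
    set g : S → ℝ := fun s' =>
      if Q s x s' = 0 then 0
      else m s x * (Q s x s' * Real.log (Q s x s' / Qθ θ s x s')) with hg
    have hFg : ∀ s', F s' = ((g s' : ℝ) : EReal) := by
      intro s'; rw [hF, hg]; dsimp only
      by_cases hq : Q s x s' = 0
      · simp [hq]
      · have hqθ : Qθ θ s x s' ≠ 0 := htop s' hq
        simp [hq, hmx, hqθ]
    rw [Finset.sum_congr rfl fun s' _ => hFg s', ← ereal_coe_sum]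
    rw [show ((0 : EReal) = ((0:ℝ) : EReal)) from rfl, EReal.coe_le_coe_iff]
    -- now a real inequality
    have hgl : ∀ s', (if Q s x s' = 0 then (0:ℝ) else m s x * (Q s x s' - Qθ θ s x s')) ≤ g s' := by
      intro s'
      rw [hg]; dsimp only
      by_cases hq : Q s x s' = 0
      · simp [hq]
      · simp only [hq, if_false]
        have hqpos : 0 < Q s x s' := lt_of_le_of_ne (hQ0 s x s') (Ne.symm hq)
        have hqθpos : 0 < Qθ θ s x s' := lt_of_le_of_ne (hQθ0 θ s x s') (Ne.symm (htop s' hq))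
        have h1 : Real.log (Qθ θ s x s' / Q s x s') ≤ Qθ θ s x s' / Q s x s' - 1 :=
          Real.log_le_sub_one_of_pos (div_pos hqθpos hqpos)
        have h2 : Real.log (Q s x s' / Qθ θ s x s') = - Real.log (Qθ θ s x s' / Q s x s') := by
          rw [← Real.log_inv, inv_div]
        have h3 : Q s x s' * (Qθ θ s x s' / Q s x s') = Qθ θ s x s' := by
          field_simp
        have key : Q s x s' - Qθ θ s x s' ≤ Q s x s' * Real.log (Q s x s' / Qθ θ s x s') := by
          rw [h2]
          nlinarith [mul_le_mul_of_nonneg_left h1 hqpos.le]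
        have := mul_le_mul_of_nonneg_left key hm0.le
        linarith [this]
    calc (0:ℝ) ≤ ∑ s', (if Q s x s' = 0 then (0:ℝ) else m s x * (Q s x s' - Qθ θ s x s')) := by
          have e1 : ∑ s', (if Q s x s' = 0 then (0:ℝ) else m s x * (Q s x s' - Qθ θ s x s'))
              = m s x * (∑ s', (if Q s x s' = 0 then (0:ℝ) else Q s x s')
                  - ∑ s', (if Q s x s' = 0 then (0:ℝ) else Qθ θ s x s')) := by
            rw [mul_sub, Finset.mul_sum, Finset.mul_sum, ← Finset.sum_sub_distrib]
            refine Finset.sum_congr rfl fun s' _ => ?_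
            by_cases hq : Q s x s' = 0 <;> simp [hq, mul_sub]
          rw [e1]
          refine mul_nonneg hm0.le (sub_nonneg.mpr ?_)
          have e2 : ∑ s', (if Q s x s' = 0 then (0:ℝ) else Q s x s') = 1 := by
            rw [← hQ1 s x hxΓ]
            refine Finset.sum_congr rfl fun s' _ => ?_
            by_cases hq : Q s x s' = 0 <;> simp [hq]
          rw [e2]
          calc ∑ s', (if Q s x s' = 0 then (0:ℝ) else Qθ θ s x s')
              ≤ ∑ s', Qθ θ s x s' := by
                refine Finset.sum_le_sum fun s' _ => ?_
                by_cases hq : Q s x s' = 0 <;> simp [hq, hQθ0 θ s x s']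
            _ = 1 := hQθ1 θ s x hxΓ
      _ ≤ ∑ s', g s' := Finset.sum_le_sum fun s' _ => hgl s'

/-- The weighted KL divergence vanishes at a correctly-specifying parameter. -/
lemma wKLD_eq_zero_of_correct (Q : S → X → S → ℝ) (Qθ : Θ → S → X → S → ℝ)
    (m : S → X → ℝ) (θstar : Θ)
    (hstar : ∀ s x s', Qθ θstar s x s' = Q s x s') :
    wKLD Q Qθ m θstar = 0 := by
  unfold wKLD
  refine Finset.sum_eq_zero fun s _ => Finset.sum_eq_zero fun x _ =>
    Finset.sum_eq_zero fun s' _ => ?_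
  rw [hstar]
  by_cases h : m s x = 0 ∨ Q s x s' = 0
  · simp [h]
  · push_neg at h
    simp [h.1, h.2, div_self h.2]

/-- In a correctly specified and strongly identified SMDP, `(σ,m)` is a
Berk-Nash equilibrium if and only if `σ` is optimal for the MDP with the true
transition probability function `Q` and `m` is a stationary distribution for `(σ,Q)`. -/
theorem berkNash_iff_optimal_of_correctly_specified_strongly_identified
    (Γ : S → Finset X) (hΓ : ∀ s, (Γ s).Nonempty)
    (Q : S → X → S → ℝ)
    (hQ0 : ∀ s x s', 0 ≤ Q s x s')
    (hQ1 : ∀ s, ∀ x ∈ Γ s, ∑ s', Q s x s' = 1)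
    (Qθ : Θ → S → X → S → ℝ)
    (hQθ0 : ∀ θ s x s', 0 ≤ Qθ θ s x s')
    (hQθ1 : ∀ θ s, ∀ x ∈ Γ s, ∑ s', Qθ θ s x s' = 1)
    (hmeas : ∀ s x s', Measurable fun θ => Qθ θ s x s')
    (π : S → X → S → ℝ) (δ : ℝ) (hδ0 : 0 ≤ δ) (hδ1 : δ < 1)
    -- correctly specified
    (hcorrect : ∃ θstar : Θ, ∀ s x s', Qθ θstar s x s' = Q s x s')
    -- strongly identified
    (hident : ∀ m : S → X → ℝ, IsDistOn Γ m →
      ∀ θ₁ ∈ ThetaQ Q Qθ m, ∀ θ₂ ∈ ThetaQ Q Qθ m,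
        ∀ s x s', Qθ θ₁ s x s' = Qθ θ₂ s x s')
    (σ : S → X → ℝ) (hσ : IsStrategy Γ σ) (m : S → X → ℝ) :
    IsBerkNash Γ Q Qθ π δ σ m ↔
      (IsOptimalMDP Γ Q π δ σ ∧ IsStationarySMDP Γ Q σ m) := by
  obtain ⟨θstar, hstar⟩ := hcorrect
  have hmin : ∀ (m' : S → X → ℝ), IsDistOn Γ m' → θstar ∈ ThetaQ Q Qθ m' := by
    intro m' hm' θ'
    rw [wKLD_eq_zero_of_correct Q Qθ m' θstar hstar]
    exact wKLD_nonneg Γ Q hQ0 hQ1 Qθ hQθ0 hQθ1 m' hm' θ'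
  constructor
  · rintro ⟨μ, hprob, hopt, hμ1, hstat⟩
    refine ⟨?_, hstat⟩
    have hQbar : (fun s x s' => ∫ θ, Qθ θ s x s' ∂μ) = Q := by
      funext s x s'
      have hsub : ThetaQ Q Qθ m ⊆ {θ | Qθ θ s x s' = Q s x s'} := fun θ hθ =>
        (hident m hstat.1 θ hθ θstar (hmin m hstat.1) s x s').trans (hstar s x s')
      have hAmeas : MeasurableSet {θ | Qθ θ s x s' = Q s x s'} :=
        (hmeas s x s') (measurableSet_singleton (Q s x s'))
      have hA1 : μ {θ | Qθ θ s x s' = Q s x s'} = 1 :=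
        le_antisymm prob_le_one (hμ1 ▸ measure_mono hsub)
      have hae : ∀ᵐ θ ∂μ, Qθ θ s x s' = Q s x s' := by
        rw [MeasureTheory.ae_iff]
        exact (prob_compl_eq_zero_iff hAmeas).mpr hA1
      calc ∫ θ, Qθ θ s x s' ∂μ = ∫ _θ, Q s x s' ∂μ := integral_congr_ae hae
        _ = Q s x s' := by simp
    rw [hQbar] at hopt
    exact hopt
  · rintro ⟨hopt, hstat⟩
    refine ⟨Measure.dirac θstar, inferInstance, ?_, ?_, hstat⟩
    · have hQbar : (fun s x s' => ∫ θ, Qθ θ s x s' ∂(Measure.dirac θstar)) = Q := by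
        funext s x s'
        rw [integral_dirac' _ θstar ((hmeas s x s').stronglyMeasurable), hstar]
      rw [hQbar]
      exact hopt
    · exact Measure.dirac_apply_of_mem (hmin m hstat.1)


end BerkNash
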